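/- arXiv:1702.01390 — 3 statements merged into one kernel-verified Lean document; each statement's English description precedes it below -/
import Mathlib

section
/- Let H be a graph and r ≥ 2 an integer. The compatibility graph C_{Hom_p(K_r, H)} (whose vertices are r-tuples (A_1,...,A_r) of non-empty pairwise complete-bipartite-connected subsets of V(H), with the natural Z_r cyclic-shift action, and where two vertices are adjacent if some nonidentity shift of one is comparable to the other under coordinatewise inclusion) contains no clique of size r+1; i.e., it is K_{r+1}-free. -/
/-- Membership in the Hom poset `Hom_p(K_r, H)`: an `r`-tuple (indexed by `ZMod r`)
of non-empty subsets of `V(H)` such that distinct coordinates are completely joined. -/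
def HomPosetMem {V : Type*} (H : SimpleGraph V) (r : ℕ) (A : ZMod r → Set V) : Prop :=
  (∀ i, (A i).Nonempty) ∧ ∀ i j : ZMod r, i ≠ j → ∀ a ∈ A i, ∀ b ∈ A j, H.Adj a b

/-- The Hom poset `Hom_p(K_r, H)`. -/
def HomPoset {V : Type*} (H : SimpleGraph V) (r : ℕ) : Type _ :=
  {A : ZMod r → Set V // HomPosetMem H r A}

instance {V : Type*} (H : SimpleGraph V) (r : ℕ) : PartialOrder (HomPoset H r) :=
  PartialOrder.lift Subtype.val Subtype.val_injective

/-- The cyclic-shift action of `ZMod r` on `Hom_p(K_r, H)`. -/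
def homShift {V : Type*} (H : SimpleGraph V) {r : ℕ} (g : ZMod r) (A : HomPoset H r) :
    HomPoset H r :=
  ⟨fun i => A.1 (i + g),
    ⟨fun i => A.2.1 (i + g),
     fun i j hij a ha b hb => A.2.2 (i + g) (j + g) (fun h => hij (by
       have := add_right_cancel h; exact this)) a ha b hb⟩⟩

/-- The compatibility graph of `Hom_p(K_r, H)` with the cyclic shift `ZMod r`-action:
two distinct tuples are adjacent iff one is comparable to a nontrivial shift of the other. -/
def compatGraph {V : Type*} (H : SimpleGraph V) (r : ℕ) : SimpleGraph (HomPoset H r) where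
  Adj x y := x ≠ y ∧ ∃ g : ZMod r, g ≠ 0 ∧
      (x ≤ homShift H g y ∨ homShift H g y ≤ x ∨ y ≤ homShift H g x ∨ homShift H g x ≤ y)
  symm := ⟨by
    rintro x y ⟨hne, g, hg, hc⟩
    exact ⟨hne.symm, g, hg, by tauto⟩⟩
  loopless := ⟨by rintro x ⟨hne, _⟩; exact hne rfl⟩

/-- The Kneser graph `KG(n,k)`. -/
def KneserGraph (n k : ℕ) : SimpleGraph {S : Finset (Fin n) // S.card = k} where
  Adj S T := S ≠ T ∧ Disjoint S.1 T.1
  symm := ⟨fun S T ⟨h, d⟩ => ⟨h.symm, d.symm⟩⟩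
  loopless := ⟨fun S ⟨h, _⟩ => h rfl⟩

section Aux

variable {V : Type*} {H : SimpleGraph V} {r : ℕ}

/-- `≤` on `HomPoset` is coordinatewise inclusion of a shift. -/
lemma homLe_shift_iff {x y : HomPoset H r} {g : ZMod r} :
    x ≤ homShift H g y ↔ ∀ i, x.1 i ⊆ y.1 (i + g) := Iff.rfl

lemma shift_homLe_iff {x y : HomPoset H r} {g : ZMod r} :
    homShift H g y ≤ x ↔ ∀ i, y.1 (i + g) ⊆ x.1 i := Iff.rfl

/-- Distinct coordinates of an element of the Hom poset are disjoint. -/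
lemma homPoset_coord_eq (y : HomPoset H r) {a : V} {i j : ZMod r}
    (hi : a ∈ y.1 i) (hj : a ∈ y.1 j) : i = j := by
  by_contra h
  exact H.loopless.irrefl a (y.2.2 i j h a hi a hj)

/-- The shift relating two comparable elements is unique. -/
lemma homShift_unique {x y : HomPoset H r} {g h : ZMod r}
    (hg : x ≤ homShift H g y) (hh : x ≤ homShift H h y) : g = h := by
  obtain ⟨a, ha⟩ := x.2.1 0
  have h1 : a ∈ y.1 (0 + g) := hg 0 ha
  have h2 : a ∈ y.1 (0 + h) := hh 0 ha
  have := homPoset_coord_eq y h1 h2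
  simpa using this

lemma homShift_trans {x y z : HomPoset H r} {g h : ZMod r}
    (hg : x ≤ homShift H g y) (hh : y ≤ homShift H h z) :
    x ≤ homShift H (g + h) z := by
  intro i a ha
  have h1 : a ∈ y.1 (i + g) := hg i ha
  have h2 : a ∈ z.1 (i + g + h) := hh (i + g) h1
  show a ∈ z.1 (i + (g + h))
  rwa [← add_assoc]

variable [Fintype V] [NeZero r]

/-- Total size of an element of the Hom poset. -/
noncomputable def homSize (x : HomPoset H r) : ℕ := ∑ i : ZMod r, (x.1 i).ncard

lemma homSize_le_of_shift_le {x y : HomPoset H r} {g : ZMod r}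
    (h : homShift H g y ≤ x) : homSize y ≤ homSize x := by
  have : homSize y = ∑ i : ZMod r, (y.1 (i + g)).ncard :=
    (Fintype.sum_equiv (Equiv.addRight g) _ _ (fun i => rfl)).symm
  rw [this]
  exact Finset.sum_le_sum fun i _ => Set.ncard_le_ncard (h i) (Set.toFinite _)

lemma le_shift_of_shift_le {x y : HomPoset H r} {g : ZMod r}
    (h : homShift H g y ≤ x) (hN : homSize x ≤ homSize y) : x ≤ homShift H g y := by
  have hyy : homSize y = ∑ i : ZMod r, (y.1 (i + g)).ncard :=
    (Fintype.sum_equiv (Equiv.addRight g) _ _ (fun i => rfl)).symm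
  have hle : ∀ i ∈ (Finset.univ : Finset (ZMod r)),
      (y.1 (i + g)).ncard ≤ (x.1 i).ncard :=
    fun i _ => Set.ncard_le_ncard (h i) (Set.toFinite _)
  have hsum : ∑ i : ZMod r, (y.1 (i + g)).ncard = ∑ i : ZMod r, (x.1 i).ncard := by
    refine le_antisymm (Finset.sum_le_sum hle) ?_
    rw [← hyy]; exact le_of_le_of_eq hN rfl
  have heq : ∀ i ∈ (Finset.univ : Finset (ZMod r)),
      (y.1 (i + g)).ncard = (x.1 i).ncard :=
    (Finset.sum_eq_sum_iff_of_le hle).mp hsum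
  intro i a ha
  have hxy : y.1 (i + g) = x.1 i :=
    Set.eq_of_subset_of_ncard_le (h i) (heq i (Finset.mem_univ i)).ge (Set.toFinite _)
  show a ∈ y.1 (i + g)
  rw [hxy]; exact ha

/-- From adjacency in the compatibility graph and a size comparison, extract a
nonzero shift witnessing `x ≤ ω^g y`. -/
lemma adj_to_le {x y : HomPoset H r} (h : (compatGraph H r).Adj x y)
    (hN : homSize x ≤ homSize y) : ∃ g : ZMod r, g ≠ 0 ∧ x ≤ homShift H g y := by
  obtain ⟨-, g, hg, hc⟩ := h
  rcases hc with h1 | h2 | h3 | h4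
  · exact ⟨g, hg, h1⟩
  · exact ⟨g, hg, le_shift_of_shift_le h2 hN⟩
  · -- y ≤ shift g x  ⟹  shift (-g) y ≤ x
    have h2 : homShift H (-g) y ≤ x := by
      intro i a ha
      have h5 : a ∈ x.1 (i + -g + g) := h3 (i + -g) ha
      rwa [neg_add_cancel_right] at h5
    exact ⟨-g, neg_ne_zero.mpr hg, le_shift_of_shift_le h2 hN⟩
  · -- shift g x ≤ y  ⟹  x ≤ shift (-g) y
    refine ⟨-g, neg_ne_zero.mpr hg, fun i a ha => ?_⟩
    refine h4 (i + -g) ?_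
    show a ∈ x.1 (i + -g + g)
    rwa [neg_add_cancel_right]

end Aux

/-- For every graph `H` and `r ≥ 2`, the compatibility graph of `Hom_p(K_r, H)`
is `K_{r+1}`-free. -/
theorem compatGraph_cliqueFree {V : Type*} [Fintype V] (H : SimpleGraph V) (r : ℕ)
    (hr : 2 ≤ r) : (compatGraph H r).CliqueFree (r + 1) := by
  haveI : NeZero r := ⟨by omega⟩
  intro t ht
  obtain ⟨hc, hcard⟩ := ht
  have hne : t.Nonempty := by
    rw [← Finset.card_pos, hcard]; omega
  obtain ⟨m, hmt, hmin⟩ := t.exists_min_image homSize hne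
  -- every element of the clique dominates `m` after some shift
  have hex : ∀ y ∈ t, ∃ g : ZMod r, m ≤ homShift H g y := by
    intro y hy
    by_cases h : m = y
    · refine ⟨0, fun i a ha => ?_⟩
      subst h
      show a ∈ m.1 (i + 0)
      rwa [add_zero]
    · obtain ⟨g, _, hle⟩ :=
        adj_to_le (hc (Finset.mem_coe.mpr hmt) (Finset.mem_coe.mpr hy) h) (hmin y hy)
      exact ⟨g, hle⟩
  classical
  set σ : HomPoset H r → ZMod r := fun y =>
    if h : ∃ g : ZMod r, m ≤ homShift H g y then h.choose else 0 with hσdef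
  have hσ : ∀ y ∈ t, m ≤ homShift H (σ y) y := by
    intro y hy
    have h := hex y hy
    simp only [hσdef, dif_pos h]
    exact h.choose_spec
  -- pigeonhole: two distinct clique elements share the same shift
  have hmaps : ∀ y ∈ t, σ y ∈ (Finset.univ : Finset (ZMod r)) := fun y _ => Finset.mem_univ _
  have hlt : (Finset.univ : Finset (ZMod r)).card < t.card := by
    rw [hcard, Finset.card_univ, ZMod.card]
    omega
  obtain ⟨y, hy, z, hz, hyz, hσeq⟩ :=
    Finset.exists_ne_map_eq_of_card_lt_of_maps_to hlt hmaps
  -- derive a contradiction from `σ y = σ z` and adjacency of `y, z`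
  have key : ∀ y z : HomPoset H r, y ∈ t → z ∈ t → σ y = σ z →
      ∀ h : ZMod r, h ≠ 0 → y ≤ homShift H h z → False := by
    intro y z hy hz hσe h hh hle
    have h1 : m ≤ homShift H (σ y + h) z := homShift_trans (hσ y hy) hle
    have h2 : m ≤ homShift H (σ z) z := hσ z hz
    have := homShift_unique h1 h2
    rw [← hσe] at this
    exact hh (add_eq_left.mp this)
  have hadj := hc (Finset.mem_coe.mpr hy) (Finset.mem_coe.mpr hz) hyz
  obtain ⟨-, g, hg, hcases⟩ := hadj
  rcases hcases with h1 | h2 | h3 | h4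
  · exact key y z hy hz hσeq g hg h1
  · -- shift g z ≤ y  ⟹  z ≤ shift (-g) y
    refine key z y hz hy hσeq.symm (-g) (neg_ne_zero.mpr hg) (fun i a ha => ?_)
    have h5 : a ∈ (homShift H g z).1 (i + -g) := by
      show a ∈ z.1 (i + -g + g)
      rwa [neg_add_cancel_right]
    exact h2 (i + -g) h5
  · exact key z y hz hy hσeq.symm g hg h3
  · -- shift g y ≤ z  ⟹  y ≤ shift (-g) z
    refine key y z hy hz hσeq (-g) (neg_ne_zero.mpr hg) (fun i a ha => ?_)
    have h5 : a ∈ (homShift H g y).1 (i + -g) := by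
      show a ∈ y.1 (i + -g + g)
      rwa [neg_add_cancel_right]
    exact h4 (i + -g) h5
end

section
/- For any graph H and any r ≥ 2, there is a graph homomorphism from C_{Hom_p(K_r, H)} to H; consequently χ(C_{Hom_p(K_r, H)}) ≤ χ(H). -/
/-- There is a graph homomorphism from the compatibility graph `C_{Hom_p(K_r,H)}` to `H`;
consequently its chromatic number is at most that of `H`. -/
theorem compatGraph_hom_to_base {V : Type*} [Fintype V] [LinearOrder V]
    (H : SimpleGraph V) (r : ℕ) (hr : 2 ≤ r) :
    Nonempty ((compatGraph H r) →g H) ∧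
      (compatGraph H r).chromaticNumber ≤ H.chromaticNumber := by
  -- key lemma: if x ≤ homShift g y with g ≠ 0, then chosen points are H-adjacent
  have key : ∀ (x y : HomPoset H r) (g : ZMod r), g ≠ 0 → x ≤ homShift H g y →
      ∀ a ∈ x.1 0, ∀ b ∈ y.1 0, H.Adj a b := by
    intro x y g hg hle a ha b hb
    have h0 : x.1 0 ⊆ (homShift H g y).1 0 := hle 0
    have ha' : a ∈ y.1 (0 + g) := h0 ha
    exact (y.2.2 (0 + g) 0 (by simpa using hg) a ha' b hb)
  -- build the homomorphism
  have hom : (compatGraph H r) →g H := by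
    refine ⟨fun A => (A.2.1 0).some, ?_⟩
    rintro x y ⟨hne, g, hg, hc⟩
    have hx : (x.2.1 0).some ∈ x.1 0 := (x.2.1 0).some_mem
    have hy : (y.2.1 0).some ∈ y.1 0 := (y.2.1 0).some_mem
    -- reduce "homShift g y ≤ x" to "y ≤ homShift (-g) x"
    have flip : ∀ (x y : HomPoset H r) (g : ZMod r),
        homShift H g y ≤ x → y ≤ homShift H (-g) x := by
      intro x y g h i
      have := h (i + -g)
      simpa [homShift] using this
    rcases hc with h | h | h | h
    · exact key x y g hg h _ hx _ hy
    · exact (key y x (-g) (by simpa using hg) (flip x y g h) _ hy _ hx).symm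
    · exact (key y x g hg h _ hy _ hx).symm
    · exact key x y (-g) (by simpa using hg) (flip y x g h) _ hx _ hy
  refine ⟨⟨hom⟩, ?_⟩
  exact SimpleGraph.chromaticNumber_le_of_forall_imp
    (fun n ⟨C⟩ => ⟨C.comp hom⟩)
end

section
/- Define λ on X ∈ (Z_r ∪ {0})^n \ {0} with X_i = {s : x_s = ω^i}: if all |X_i| ≤ k-1, λ(X) = (ω^t, Σ_i |X_i|) where ω^t is the first nonzero entry of X; if some |X_i| ≥ k and some |X_j| ≤ k-1, λ(X) = (ω^t, r(k-1) + #{i : |X_i| ≥ k}) where ω^t is the first nonzero entry of X with |X_t| ≥ k. Then λ is Z_r-equivariant on its domain of definition: λ(ω^m.X) = ω^m.λ(X) for all m, where ω^m acts on the codomain Z_r × ℕ by multiplication in the first factor. -/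
/-- The domain `(Z_r ∪ {0})^n \ {(0,...,0)}`, with `Z_r` written additively as `ZMod r`
and `0` modelled by `none`. -/
def TuckerDom (r n : ℕ) : Type :=
  {X : Fin n → Option (ZMod r) // ∃ s, X s ≠ none}

/-- The coordinatewise `ZMod r`-action on the Tucker domain (fixing `0 = none`). -/
def tuckerAct {r n : ℕ} (g : ZMod r) (X : TuckerDom r n) : TuckerDom r n :=
  ⟨fun s => (X.1 s).map (g + ·), by
    obtain ⟨s, hs⟩ := X.2
    exact ⟨s, by simpa [Option.map_eq_none_iff] using hs⟩⟩

/-- The order on the Tucker domain: `X ≤ Y` iff `x_s = y_s` whenever `x_s ≠ 0`. -/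
def TuckerLE {r n : ℕ} (X Y : TuckerDom r n) : Prop :=
  ∀ s, X.1 s ≠ none → X.1 s = Y.1 s

/-- The class `X_i = {s : x_s = ω^i}` of a sign vector. -/
def clsF {r n : ℕ} (X : Fin n → Option (ZMod r)) (i : ZMod r) : Finset (Fin n) :=
  Finset.univ.filter (fun s => X s = some i)

/-- `binomV k X i` is the family of all `k`-subsets of the class `X_i`,
viewed as a set of vertices of the Kneser graph `KG(n,k)`. -/
def binomV {r n : ℕ} (k : ℕ) (X : Fin n → Option (ZMod r)) (i : ZMod r) :
    Set {S : Finset (Fin n) // S.card = k} :=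
  {S | S.1 ⊆ clsF X i}

lemma cls_act {r n : ℕ} (m : ZMod r) (X : TuckerDom r n) (i : ZMod r) :
    clsF (tuckerAct m X).1 i = clsF X.1 (i - m) := by
  ext s
  simp only [clsF, Finset.mem_filter, Finset.mem_univ, true_and, tuckerAct,
    Option.map_eq_some_iff]
  constructor
  · rintro ⟨a, ha, rfl⟩
    simpa using ha
  · intro h
    exact ⟨i - m, h, by ring⟩

/-- The labelling `λ` of the `Z_r`-Tucker argument (cases: all classes of size `≤ k-1`;
some class of size `≥ k` and some of size `≤ k-1`) is `Z_r`-equivariant on its domain of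
definition. -/
theorem lambda_equivariant (n k r : ℕ) [NeZero r] (hr : 2 ≤ r) (hk : 1 ≤ k)
    (lam : TuckerDom r n → ZMod r × ℕ)
    (h1 : ∀ X : TuckerDom r n, (∀ i, (clsF X.1 i).card ≤ k - 1) →
      ∃ (s : Fin n) (t : ZMod r), X.1 s = some t ∧ (∀ s' < s, X.1 s' = none) ∧
        lam X = (t, ∑ i : ZMod r, (clsF X.1 i).card))
    (h2 : ∀ X : TuckerDom r n,
      (∃ i, k ≤ (clsF X.1 i).card) → (∃ j, (clsF X.1 j).card ≤ k - 1) →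
      ∃ (s : Fin n) (t : ZMod r), X.1 s = some t ∧ k ≤ (clsF X.1 t).card ∧
        (∀ s' < s, ∀ t', X.1 s' = some t' → (clsF X.1 t').card < k) ∧
        lam X = (t, r * (k - 1) +
          (Finset.univ.filter (fun i : ZMod r => k ≤ (clsF X.1 i).card)).card))
    (m : ZMod r) (X : TuckerDom r n) (hdom : ∃ i, (clsF X.1 i).card ≤ k - 1) :
    lam (tuckerAct m X) = (m + (lam X).1, (lam X).2) := by
  by_cases hall : ∀ i, (clsF X.1 i).card ≤ k - 1
  · obtain ⟨s, t, hst, hmin, hlam⟩ := h1 X hall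
    have hall' : ∀ i, (clsF (tuckerAct m X).1 i).card ≤ k - 1 := fun i => by
      rw [cls_act]; exact hall _
    obtain ⟨s2, t2, hst2, hmin2, hlam2⟩ := h1 (tuckerAct m X) hall'
    have hss : s = s2 := by
      rcases lt_trichotomy s s2 with h | h | h
      · have h' := hmin2 s h
        simp [tuckerAct, hst] at h'
      · exact h
      · have h' := hmin s2 h
        simp [tuckerAct, h'] at hst2
    subst hss
    have htt : t2 = m + t := by
      have hx : (tuckerAct m X).1 s = some (m + t) := by simp [tuckerAct, hst]
      rw [hst2] at hx
      exact Option.some_inj.mp hx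
    rw [hlam, hlam2, htt]
    refine Prod.ext rfl ?_
    simp only
    have : ∀ i, (clsF (tuckerAct m X).1 i).card = (clsF X.1 (i - m)).card := fun i => by
      rw [cls_act]
    simp only [this]
    exact Fintype.sum_equiv (Equiv.subRight m) _ _ (fun i => rfl)
  · push_neg at hall
    obtain ⟨i0, hi0⟩ := hall
    have hi0' : k ≤ (clsF X.1 i0).card := by omega
    obtain ⟨s, t, hst, hkt, hmin, hlam⟩ := h2 X ⟨i0, hi0'⟩ hdom
    have hsome' : ∃ i, k ≤ (clsF (tuckerAct m X).1 i).card := by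
      refine ⟨i0 + m, ?_⟩
      rw [cls_act]; simpa using hi0'
    have hdom' : ∃ j, (clsF (tuckerAct m X).1 j).card ≤ k - 1 := by
      obtain ⟨j, hj⟩ := hdom
      refine ⟨j + m, ?_⟩
      rw [cls_act]; simpa using hj
    obtain ⟨s2, t2, hst2, hkt2, hmin2, hlam2⟩ := h2 (tuckerAct m X) hsome' hdom'
    have hss : s = s2 := by
      rcases lt_trichotomy s s2 with h | h | h
      · have hx : (tuckerAct m X).1 s = some (m + t) := by simp [tuckerAct, hst]
        have h' := hmin2 s h (m + t) hx
        rw [cls_act] at h'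
        simp only [add_sub_cancel_left] at h'
        omega
      · exact h
      · have hx : X.1 s2 = some (t2 - m) := by
          have := hst2
          simp only [tuckerAct, Option.map_eq_some_iff] at this
          obtain ⟨a, ha, hma⟩ := this
          rw [ha]
          congr 1
          rw [← hma]; ring
        have h' := hmin s2 h (t2 - m) hx
        rw [cls_act] at hkt2
        omega
    subst hss
    have htt : t2 = m + t := by
      have hx : (tuckerAct m X).1 s = some (m + t) := by simp [tuckerAct, hst]
      rw [hst2] at hx
      exact Option.some_inj.mp hx
    rw [hlam, hlam2, htt]
    refine Prod.ext rfl ?_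
    simp only
    congr 1
    have : ∀ i, (clsF (tuckerAct m X).1 i).card = (clsF X.1 (i - m)).card := fun i => by
      rw [cls_act]
    simp only [this]
    exact Finset.card_equiv (Equiv.subRight m) (fun i => by
      simp [Finset.mem_filter])
end
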